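/- Let E be a field of characteristic ≠ 2 and q a nonsingular quadratic form of rank r over E. If the u-invariant of E (the supremum of dimensions of anisotropic quadratic forms over E) satisfies u(E) < 2r, then the spinor norm map SO(q)(E) → E*/E*² is surjective. -/

import Mathlib

/-- **Surjectivity of the spinor norm when the u-invariant is small.**
Let `E` be a field of characteristic `≠ 2` and `q` a nonsingular quadratic form of
rank `r` over `E` (on a finite-dimensional vector space `V` with `r = finrank E V`).
Assume `u(E) < 2r`, i.e. every anisotropic quadratic form over `E` has dimension
`< 2 * r`.  Then the spinor norm map `SO(q)(E) → E*/E*²` is surjective; concretely,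
every class `α ∈ E*/E*²` is represented by a product `q(v₁) ⋯ q(v₂ₘ)` over an even
number of anisotropic vectors for `q`. -/
theorem spinor_norm_surjective_of_u_invariant_lt
    (E : Type*) [Field E] (hchar : (2 : E) ≠ 0)
    (V : Type*) [AddCommGroup V] [Module E V] [FiniteDimensional E V]
    (q : QuadraticForm E V)
    (hnd : ∀ v : V, (∀ w : V, QuadraticMap.polar q v w = 0) → v = 0)
    (hu : ∀ (n : ℕ) (φ : QuadraticForm E (Fin n → E)),
      φ.Anisotropic → n < 2 * Module.finrank E V) :
    ∀ α : E, α ≠ 0 →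
      ∃ l : List V, Even l.length ∧ (∀ v ∈ l, q v ≠ 0) ∧
        ∃ c : E, c ≠ 0 ∧ α = (l.map fun v => q v).prod * c ^ 2 := by
  intro α hα
  by_cases hiso : ∃ v : V, v ≠ 0 ∧ q v = 0
  · -- q is isotropic, hence universal
    obtain ⟨v, hv, hqv⟩ := hiso
    have hpol : ¬ ∀ w, QuadraticMap.polar q v w = 0 := fun h => hv (hnd v h)
    push_neg at hpol
    obtain ⟨w, hw⟩ := hpol
    have hrep : ∀ β : E, ∃ u : V, q u = β := by
      intro β
      set t : E := (β - q w) / QuadraticMap.polar q v w with ht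
      refine ⟨t • v + w, ?_⟩
      have h1 : q (t • v + w) = q (t • v) + q w + QuadraticMap.polar q (t • v) w := by
        rw [QuadraticMap.polar]; ring
      rw [h1, QuadraticMap.map_smul, QuadraticMap.polar_smul_left, hqv, smul_eq_mul,
        smul_eq_mul, mul_zero, ht]
      field_simp
      ring
    obtain ⟨u₁, hu₁⟩ := hrep α
    obtain ⟨u₂, hu₂⟩ := hrep 1
    refine ⟨[u₁, u₂], by simp, ?_, 1, one_ne_zero, by simp [hu₁, hu₂]⟩
    intro x hx
    simp only [List.mem_cons, List.mem_singleton, List.not_mem_nil, or_false] at hx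
    rcases hx with rfl | rfl
    · rw [hu₁]; exact hα
    · rw [hu₂]; exact one_ne_zero
  · -- q is anisotropic
    push_neg at hiso
    have haniso : ∀ v : V, q v = 0 → v = 0 := by
      intro v hv
      by_contra h
      exact (hiso v h) hv
    -- form q ⊥ (-α) • q on V × V
    set Q2 : QuadraticForm E (V × V) := q.prod ((-α) • q) with hQ2
    set m := Module.finrank E (V × V) with hm
    let e := (Module.finBasis E (V × V)).equivFun.symm
    set φ : QuadraticForm E (Fin m → E) := Q2.comp e.toLinearMap with hφ
    have hm2 : m = 2 * Module.finrank E V := by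
      rw [hm, Module.finrank_prod]; ring
    have hnot : ¬ φ.Anisotropic := by
      intro h
      have := hu m φ h
      omega
    rw [QuadraticMap.Anisotropic] at hnot
    push_neg at hnot
    obtain ⟨x, hx0, hxne⟩ := hnot
    have hex : e x ≠ 0 := fun h => hxne (by simpa using e.injective (by simpa using h))
    have hval : q (e x).1 + (-α) * q (e x).2 = 0 := by
      have : φ x = Q2 (e x) := rfl
      rw [this] at hx0
      simpa [hQ2, QuadraticMap.prod_apply, smul_eq_mul] using hx0
    have hqv : q (e x).1 = α * q (e x).2 := by linear_combination hval
    have hw2 : (e x).2 ≠ 0 := by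
      intro h
      have h2 : q (e x).2 = 0 := by rw [h]; exact QuadraticMap.map_zero q
      have h1 : q (e x).1 = 0 := by rw [hqv, h2, mul_zero]
      have : (e x).1 = 0 := haniso _ h1
      exact hex (Prod.ext this h)
    have hq2 : q (e x).2 ≠ 0 := fun h => hw2 (haniso _ h)
    have hq1 : q (e x).1 ≠ 0 := by
      rw [hqv]; exact mul_ne_zero hα hq2
    refine ⟨[(e x).1, (e x).2], by simp, ?_, (q (e x).2)⁻¹, inv_ne_zero hq2, ?_⟩
    · intro y hy
      simp only [List.mem_cons, List.mem_singleton, List.not_mem_nil, or_false] at hy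
      rcases hy with rfl | rfl
      · exact hq1
      · exact hq2
    · simp only [List.map_cons, List.map_nil, List.prod_cons, List.prod_nil, mul_one]
      rw [hqv]
      field_simp
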